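/- Every doubly stochastic n×n matrix has a nonzero permanent; equivalently, for every x ∈ B_n there exists a permutation σ with x_{j σ(j)} > 0 for all j. -/
import Mathlib

theorem birkhoff_permanent_pos (n : ℕ) (x : Matrix (Fin n) (Fin n) ℝ)
    (hx : x ∈ doublyStochastic ℝ (Fin n)) :
    x.permanent ≠ 0 ∧ ∃ σ : Equiv.Perm (Fin n), ∀ j, 0 < x j (σ j) := by
  obtain ⟨w, hw0, hw1, hwx⟩ := exists_eq_sum_perm_of_mem_doublyStochastic hx
  have hex : ∃ σ : Equiv.Perm (Fin n), 0 < w σ := by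
    by_contra h
    push_neg at h
    have : ∑ σ : Equiv.Perm (Fin n), w σ = 0 := by
      refine Finset.sum_eq_zero fun σ _ => le_antisymm (h σ) (hw0 σ)
    simp [this] at hw1
  obtain ⟨σ, hσ⟩ := hex
  have hpos : ∀ j, 0 < x j (σ j) := by
    intro j
    have : w σ ≤ x j (σ j) := by
      rw [← hwx]
      simp only [Matrix.sum_apply, Matrix.smul_apply, smul_eq_mul]
      have hterm : w σ * (σ.permMatrix ℝ) j (σ j) = w σ := by
        simp [Equiv.Perm.permMatrix, Matrix.one_apply, Equiv.toPEquiv_apply]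
      calc w σ = w σ * (σ.permMatrix ℝ) j (σ j) := hterm.symm
        _ ≤ ∑ τ : Equiv.Perm (Fin n), w τ * (τ.permMatrix ℝ) j (σ j) := by
            refine Finset.single_le_sum (f := fun τ => w τ * (τ.permMatrix ℝ) j (σ j))
              (fun τ _ => mul_nonneg (hw0 τ) ?_) (Finset.mem_univ σ)
            simp only [Equiv.Perm.permMatrix, PEquiv.toMatrix_apply, Equiv.toPEquiv_apply,
              Option.mem_def, Option.some.injEq]
            split <;> norm_num
    linarith [hσ]
  refine ⟨?_, σ, hpos⟩
  have : 0 < x.permanent := by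
    have h1 : 0 < ∏ i, x (σ⁻¹ i) i :=
      Finset.prod_pos fun i _ => by simpa using hpos (σ⁻¹ i)
    calc (0:ℝ) < ∏ i, x (σ⁻¹ i) i := h1
      _ ≤ ∑ τ : Equiv.Perm (Fin n), ∏ i, x (τ i) i := by
          refine Finset.single_le_sum (f := fun τ : Equiv.Perm (Fin n) => ∏ i, x (τ i) i)
            (fun τ _ => Finset.prod_nonneg fun i _ =>
            nonneg_of_mem_doublyStochastic hx) (Finset.mem_univ σ⁻¹)
      _ = x.permanent := by rw [Matrix.permanent]
  exact this.ne'
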